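/- Let U ⊆ ℝ^d be an open convex set and let (f_n) be a sequence of convex differentiable functions f_n : U → ℝ converging pointwise to a differentiable convex function f : U → ℝ. Then for every compact set K ⊂ U, the gradients ∇f_n converge to ∇f uniformly on K. -/

import Mathlib

open Filter Metric Topology

lemma subgrad_ineq {E : Type*} [NormedAddCommGroup E] [NormedSpace ℝ E]
    {U : Set E} {g : E → ℝ} (hg : ConvexOn ℝ U g) {x : E} (hx : x ∈ U)
    (hd : DifferentiableAt ℝ g x) {y : E} (hy : y ∈ U) :
    g x + fderiv ℝ g x (y - x) ≤ g y := by
  set v := y - x with hv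
  have h1 : HasDerivAt (fun t : ℝ => x + t • v) v 0 := by
    simpa using ((hasDerivAt_id (0:ℝ)).smul_const v).const_add x
  have hd' : HasFDerivAt g (fderiv ℝ g x) (x + (0:ℝ) • v) := by
    simpa using hd.hasFDerivAt
  have h2 : HasDerivAt (fun t : ℝ => g (x + t • v)) (fderiv ℝ g x v) 0 :=
    hd'.comp_hasDerivAt 0 h1
  have h3 : Tendsto (slope (fun t : ℝ => g (x + t • v)) 0) (𝓝[>] 0)
      (𝓝 (fderiv ℝ g x v)) :=
    (hasDerivAt_iff_tendsto_slope.1 h2).mono_left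
      (nhdsWithin_mono 0 (fun t ht => ne_of_gt ht))
  have h4 : ∀ᶠ t in 𝓝[>] (0:ℝ), slope (fun t : ℝ => g (x + t • v)) 0 t ≤ g y - g x := by
    filter_upwards [Ioc_mem_nhdsGT_of_mem (by constructor <;> norm_num : (0:ℝ) ∈ Set.Ico 0 1)]
      with t ht
    have hpt : x + t • v = (1 - t) • x + t • y := by rw [hv]; module
    have hcc : g (x + t • v) ≤ (1 - t) * g x + t * g y := by
      rw [hpt]
      exact hg.2 hx hy (by linarith [ht.2]) (le_of_lt ht.1) (by ring)
    rw [slope_def_field]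
    have : (g (x + t • v) - g (x + (0:ℝ) • v)) / (t - 0) ≤ g y - g x := by
      rw [div_le_iff₀ (by linarith [ht.1])]
      simp only [zero_smul, add_zero, sub_zero]
      nlinarith [ht.1]
    simpa using this
  have := le_of_tendsto h3 h4
  linarith

lemma subgrad_unique {E : Type*} [NormedAddCommGroup E] [NormedSpace ℝ E]
    {U : Set E} (hUo : IsOpen U) {g : E → ℝ} {x : E} (hx : x ∈ U)
    (hd : DifferentiableAt ℝ g x) {L : E →L[ℝ] ℝ}
    (hL : ∀ y ∈ U, g x + L (y - x) ≤ g y) :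
    L = fderiv ℝ g x := by
  have key : ∀ v : E, L v ≤ fderiv ℝ g x v := by
    intro v
    have h1 : HasDerivAt (fun t : ℝ => x + t • v) v 0 := by
      simpa using ((hasDerivAt_id (0:ℝ)).smul_const v).const_add x
    have hd' : HasFDerivAt g (fderiv ℝ g x) (x + (0:ℝ) • v) := by
      simpa using hd.hasFDerivAt
    have h2 : HasDerivAt (fun t : ℝ => g (x + t • v)) (fderiv ℝ g x v) 0 :=
      hd'.comp_hasDerivAt 0 h1
    have h3 : Tendsto (slope (fun t : ℝ => g (x + t • v)) 0) (𝓝[>] 0)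
        (𝓝 (fderiv ℝ g x v)) :=
      (hasDerivAt_iff_tendsto_slope.1 h2).mono_left
        (nhdsWithin_mono 0 (fun t ht => ne_of_gt ht))
    have hev : ∀ᶠ t in 𝓝[>] (0:ℝ), L v ≤ slope (fun t : ℝ => g (x + t • v)) 0 t := by
      have hcont : Tendsto (fun t : ℝ => x + t • v) (𝓝 0) (𝓝 x) := by
        simpa using h1.continuousAt.tendsto
      have hmem : ∀ᶠ t in 𝓝 (0:ℝ), x + t • v ∈ U := hcont.eventually (hUo.eventually_mem hx)
      filter_upwards [nhdsWithin_le_nhds hmem, self_mem_nhdsWithin] with t htU (htpos : 0 < t)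
      have := hL _ htU
      rw [slope_def_field]
      have h5 : L (x + t • v - x) = t * L v := by
        rw [show x + t • v - x = t • v by abel]; simp
      rw [le_div_iff₀ (by linarith)]
      simp only [zero_smul, add_zero, sub_zero]
      nlinarith [this, h5]
    exact ge_of_tendsto h3 hev
  ext v
  have h1 := key v
  have h2 := key (-v)
  simp only [map_neg] at h2
  linarith

lemma unif_bound {d : ℕ} {U : Set (Fin d → ℝ)} {ι : Type*} (g : ι → (Fin d → ℝ) → ℝ)
    (hconv : ∀ i, ConvexOn ℝ U (g i))
    (hbd : ∀ x ∈ U, ∃ B, ∀ i, |g i x| ≤ B)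
    {c : Fin d → ℝ} {s : ℝ} (hs : 0 < s) (hball : closedBall c (2*s) ⊆ U) :
    ∃ M, ∀ i, ∀ y ∈ closedBall c (2*s), |g i y| ≤ M := by
  classical
  set V : Set (Fin d → ℝ) := Set.pi Set.univ (fun i => {c i - 2*s, c i + 2*s}) with hV
  have hcube : closedBall c (2*s) = Set.pi Set.univ (fun i => Set.Icc (c i - 2*s) (c i + 2*s)) := by
    rw [closedBall_pi _ (by linarith)]
    exact Set.pi_congr rfl (fun j _ => Real.closedBall_eq_Icc)
  have hhull : convexHull ℝ V = closedBall c (2*s) := by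
    rw [hV, convexHull_pi, hcube]
    exact Set.pi_congr rfl
      (fun j _ => by rw [convexHull_pair, segment_eq_Icc (by linarith : c j - 2*s ≤ c j + 2*s)])
  have hVU : V ⊆ U := by
    intro v hv
    apply hball
    rw [hcube]
    intro i _
    rcases hv i (Set.mem_univ i) with h | h <;> rw [h] <;>
      constructor <;> linarith
  have hVfin : V.Finite := Set.Finite.pi (fun i => (Set.finite_singleton _).insert _)
  choose! B hB using fun v (hv : v ∈ V) => hbd v (hVU hv)
  obtain ⟨M₀, hM₀⟩ := (hVfin.image B).bddAbove
  have hub : ∀ i, ∀ y ∈ closedBall c (2*s), g i y ≤ M₀ := by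
    intro i y hy
    rw [← hhull] at hy
    obtain ⟨v, hvV, hvy⟩ := (hconv i).exists_ge_of_mem_convexHull hVU hy
    exact hvy.trans ((abs_le.1 (hB v hvV i)).2.trans (hM₀ (Set.mem_image_of_mem B hvV)))
  obtain ⟨C, hC⟩ := hbd c (hball (mem_closedBall_self (by linarith)))
  refine ⟨max M₀ (2*C + M₀), fun i y hy => abs_le.2 ⟨?_, le_max_of_le_left (hub i y hy)⟩⟩
  set z : Fin d → ℝ := c + (c - y) with hz
  have hzball : z ∈ closedBall c (2*s) := by
    rw [mem_closedBall, dist_eq_norm, hz]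
    rw [mem_closedBall, dist_eq_norm] at hy
    simpa [norm_sub_rev] using hy
  have hmid : (1/2 : ℝ) • y + (1/2 : ℝ) • z = c := by rw [hz]; module
  have hcc := (hconv i).2 (hball hy) (hball hzball)
    (by norm_num : (0:ℝ) ≤ 1/2) (by norm_num : (0:ℝ) ≤ 1/2) (by norm_num)
  rw [hmid] at hcc
  have h1 : |g i c| ≤ C := hC i
  have h2 : g i z ≤ M₀ := hub i z hzball
  have := abs_le.1 h1
  rw [smul_eq_mul, smul_eq_mul] at hcc
  have hle : -(g i y) ≤ 2*C + M₀ := by nlinarith [this.1, this.2]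
  exact neg_le.1 (hle.trans (le_max_right _ _))

lemma grad_bound {d : ℕ} {U : Set (Fin d → ℝ)} (hUo : IsOpen U) {g : (Fin d → ℝ) → ℝ}
    (hg : ConvexOn ℝ U g) (hgd : DifferentiableOn ℝ g U) {c : Fin d → ℝ} {s M : ℝ}
    (hs : 0 < s) (hball : closedBall c (2*s) ⊆ U)
    (hM : ∀ y ∈ closedBall c (2*s), |g y| ≤ M)
    {x : Fin d → ℝ} (hx : x ∈ closedBall c s) :
    ‖fderiv ℝ g x‖ ≤ 2*M/s := by
  have hxU2 : x ∈ closedBall c (2*s) := closedBall_subset_closedBall (by linarith) hx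
  have hxU : x ∈ U := hball hxU2
  have hdx : DifferentiableAt ℝ g x := hgd.differentiableAt (hUo.mem_nhds hxU)
  have hM0 : 0 ≤ M := (abs_nonneg _).trans (hM x hxU2)
  have key : ∀ v : Fin d → ℝ, fderiv ℝ g x v ≤ 2*M/s * ‖v‖ := by
    intro v
    rcases eq_or_ne v 0 with rfl | hv
    · simp [div_nonneg (by linarith) hs.le]
    have hvpos : 0 < ‖v‖ := norm_pos_iff.2 hv
    set y : Fin d → ℝ := x + (s/‖v‖) • v with hy
    have hyball : y ∈ closedBall c (2*s) := by
      rw [mem_closedBall]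
      calc dist y c ≤ dist y x + dist x c := dist_triangle _ _ _
        _ ≤ s + s := by
            refine add_le_add ?_ (mem_closedBall.1 hx)
            rw [hy, dist_eq_norm]
            simp only [add_sub_cancel_left, norm_smul, Real.norm_eq_abs,
              abs_of_pos (div_pos hs hvpos)]
            rw [div_mul_cancel₀ _ (ne_of_gt hvpos)]
        _ = 2*s := by ring
    have hsub := subgrad_ineq hg hxU hdx (hball hyball)
    have h1 : fderiv ℝ g x (y - x) = (s/‖v‖) * fderiv ℝ g x v := by
      rw [hy, show x + (s/‖v‖) • v - x = (s/‖v‖) • v by abel]; simp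
    have h2 : g y - g x ≤ 2*M := by
      have := abs_le.1 (hM y hyball)
      have := abs_le.1 (hM x hxU2)
      linarith [this.1]
    rw [h1] at hsub
    rw [div_mul_eq_mul_div, le_div_iff₀ hs]
    have : (s/‖v‖) * fderiv ℝ g x v ≤ 2*M := by linarith
    calc fderiv ℝ g x v * s = ((s/‖v‖) * fderiv ℝ g x v) * ‖v‖ := by
          field_simp
      _ ≤ 2*M*‖v‖ := by nlinarith
      _ = 2*M*‖v‖ := rfl
  refine ContinuousLinearMap.opNorm_le_bound _ (div_nonneg (by linarith) hs.le) (fun v => ?_)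
  rw [Real.norm_eq_abs, abs_le]
  constructor
  · have := key (-v); simp only [map_neg, norm_neg] at this; linarith
  · exact key v

lemma tendsto_of_bdd_of_subseq_limits {F : Type*} [NormedAddCommGroup F] [NormedSpace ℝ F]
    [FiniteDimensional ℝ F] {z : ℕ → F} {C : ℝ} (hb : ∀ k, ‖z k‖ ≤ C) {L : F}
    (h : ∀ (w : F) (ns : ℕ → ℕ), Tendsto ns atTop atTop →
      Tendsto (z ∘ ns) atTop (𝓝 w) → w = L) :
    Tendsto z atTop (𝓝 L) := by
  haveI : ProperSpace F := FiniteDimensional.proper ℝ F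
  apply tendsto_of_subseq_tendsto
  intro ns hns
  have hmem : ∀ k, z (ns k) ∈ closedBall (0:F) C := fun k => by
    simpa [Metric.mem_closedBall, dist_zero_right] using hb (ns k)
  obtain ⟨w, -, ms, hms, hzw⟩ := (isCompact_closedBall (0:F) C).tendsto_subseq hmem
  refine ⟨ms, ?_⟩
  have hw : w = L := h w (ns ∘ ms) (hns.comp hms.tendsto_atTop) hzw
  rw [← hw]
  exact hzw

lemma eval_tendsto {d : ℕ} {z : ℕ → (Fin d → ℝ) →L[ℝ] ℝ} {w : (Fin d → ℝ) →L[ℝ] ℝ}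
    {u : ℕ → Fin d → ℝ} {a : Fin d → ℝ} (hz : Tendsto z atTop (𝓝 w))
    (hu : Tendsto u atTop (𝓝 a)) :
    Tendsto (fun k => z k (u k)) atTop (𝓝 (w a)) := by
  have hc : Continuous fun p : ((Fin d → ℝ) →L[ℝ] ℝ) × (Fin d → ℝ) => p.1 p.2 :=
    isBoundedBilinearMap_apply.continuous
  exact (hc.tendsto (w, a)).comp (hz.prodMk_nhds hu)


/-- Rockafellar: pointwise convergence of differentiable convex functions to a
differentiable convex function implies uniform convergence of derivatives on
compact subsets. -/
theorem convex_pointwise_implies_uniform_deriv (d : ℕ)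
    (U : Set (Fin d → ℝ)) (hUo : IsOpen U) (hUc : Convex ℝ U)
    (fs : ℕ → (Fin d → ℝ) → ℝ) (f : (Fin d → ℝ) → ℝ)
    (hconv : ∀ n, ConvexOn ℝ U (fs n))
    (hdiff : ∀ n, DifferentiableOn ℝ (fs n) U)
    (hfconv : ConvexOn ℝ U f)
    (hfdiff : DifferentiableOn ℝ f U)
    (hpt : ∀ x ∈ U, Tendsto (fun n => fs n x) atTop (nhds (f x))) :
    ∀ K : Set (Fin d → ℝ), K ⊆ U → IsCompact K →
      TendstoUniformlyOn (fun n x => fderiv ℝ (fs n) x) (fun x => fderiv ℝ f x)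
        atTop K := by
  intro K hKU hKc
  rw [Metric.tendstoUniformlyOn_iff]
  by_contra hcon
  push_neg at hcon
  obtain ⟨ε, hε, hfreq⟩ := hcon
  obtain ⟨φ, hφ, hP⟩ := extraction_of_frequently_atTop hfreq
  choose x₀ hx₀K hx₀d using hP
  obtain ⟨xb, hxbK, ψ, hψ, hyx0⟩ := hKc.tendsto_subseq hx₀K
  have hxbU : xb ∈ U := hKU hxbK
  obtain ⟨δ, hδ, hδU⟩ := Metric.isOpen_iff.1 hUo xb hxbU
  set s := δ/3 with hsdef
  have hs : 0 < s := by positivity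
  have hball : closedBall xb (2*s) ⊆ U := by
    refine (closedBall_subset_ball ?_).trans hδU
    rw [hsdef]; linarith
  obtain ⟨M, hM⟩ := unif_bound (U := U) (ι := Option ℕ) (fun o => o.elim f fs)
    (fun o => by cases o with
      | none => exact hfconv
      | some n => exact hconv n)
    (fun x hx => by
      obtain ⟨B, hB⟩ := ((hpt x hx).abs).bddAbove_range
      refine ⟨max B (|f x|), fun o => ?_⟩
      cases o with
      | none => exact le_max_right _ _
      | some n => exact le_max_of_le_left (hB ⟨n, rfl⟩))
    hs hball
  have hMf : ∀ y ∈ closedBall xb (2*s), |f y| ≤ M := fun y hy => hM none y hy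
  have hMn : ∀ n, ∀ y ∈ closedBall xb (2*s), |fs n y| ≤ M := fun n y hy => hM (some n) y hy
  set C := 2*M/s with hCdef
  have hgb : ∀ n, ∀ x ∈ closedBall xb s, ‖fderiv ℝ (fs n) x‖ ≤ C :=
    fun n x hx => grad_bound hUo (hconv n) (hdiff n) hs hball (hMn n) hx
  have hgbf : ∀ x ∈ closedBall xb s, ‖fderiv ℝ f x‖ ≤ C :=
    fun x hx => grad_bound hUo hfconv hfdiff hs hball hMf hx
  have hev : ∀ᶠ k in atTop, (x₀ ∘ ψ) k ∈ closedBall xb s :=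
    hyx0.eventually_mem (closedBall_mem_nhds xb hs)
  obtain ⟨N, hN⟩ := eventually_atTop.1 hev
  set y : ℕ → Fin d → ℝ := fun k => x₀ (ψ (k + N)) with hy
  set m : ℕ → ℕ := fun k => φ (ψ (k + N)) with hmdef
  have hyball : ∀ k, y k ∈ closedBall xb s := fun k => hN _ (Nat.le_add_left N k)
  have hyU : ∀ k, y k ∈ U := fun k =>
    hball (closedBall_subset_closedBall (by linarith) (hyball k))
  have hytend : Tendsto y atTop (𝓝 xb) := hyx0.comp (tendsto_add_atTop_nat N)
  have hmtend : Tendsto m atTop atTop :=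
    ((hφ.tendsto_atTop.comp hψ.tendsto_atTop).comp (tendsto_add_atTop_nat N))
  have hdist : ∀ k, ε ≤ dist (fderiv ℝ f (y k)) (fderiv ℝ (fs (m k)) (y k)) :=
    fun k => hx₀d _
  have hlip : ∀ n, ∀ a ∈ closedBall xb s, ∀ b ∈ closedBall xb s,
      |fs n a - fs n b| ≤ C * ‖a - b‖ := by
    intro n a ha b hb
    have haU : a ∈ U := hball (closedBall_subset_closedBall (by linarith) ha)
    have hbU : b ∈ U := hball (closedBall_subset_closedBall (by linarith) hb)
    have h1 := subgrad_ineq (hconv n) haU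
      ((hdiff n).differentiableAt (hUo.mem_nhds haU)) hbU
    have h2 := subgrad_ineq (hconv n) hbU
      ((hdiff n).differentiableAt (hUo.mem_nhds hbU)) haU
    have e1 : |fderiv ℝ (fs n) a (b - a)| ≤ C * ‖a - b‖ := by
      calc |fderiv ℝ (fs n) a (b - a)| ≤ ‖fderiv ℝ (fs n) a‖ * ‖b - a‖ :=
            (fderiv ℝ (fs n) a).le_opNorm _
        _ ≤ C * ‖a - b‖ := by
            rw [norm_sub_rev]
            exact mul_le_mul_of_nonneg_right (hgb n a ha) (norm_nonneg _)
    have e2 : |fderiv ℝ (fs n) b (a - b)| ≤ C * ‖a - b‖ := by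
      calc |fderiv ℝ (fs n) b (a - b)| ≤ ‖fderiv ℝ (fs n) b‖ * ‖a - b‖ :=
            (fderiv ℝ (fs n) b).le_opNorm _
        _ ≤ C * ‖a - b‖ :=
            mul_le_mul_of_nonneg_right (hgb n b hb) (norm_nonneg _)
    have e1' := abs_le.1 e1
    have e2' := abs_le.1 e2
    rw [abs_le]
    constructor <;> linarith [e1'.1, e1'.2, e2'.1, e2'.2]
  have hfdxb : DifferentiableAt ℝ f xb := hfdiff.differentiableAt (hUo.mem_nhds hxbU)
  have main : ∀ (h : ℕ → (Fin d → ℝ) → ℝ),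
      (∀ k, ConvexOn ℝ U (h k)) → (∀ k, DifferentiableOn ℝ (h k) U) →
      (∀ k, ‖fderiv ℝ (h k) (y k)‖ ≤ C) →
      (Tendsto (fun k => h k (y k)) atTop (𝓝 (f xb))) →
      (∀ u ∈ U, Tendsto (fun k => h k u) atTop (𝓝 (f u))) →
      Tendsto (fun k => fderiv ℝ (h k) (y k)) atTop (𝓝 (fderiv ℝ f xb)) := by
    intro h hcv hdf hbd hval hptw
    apply tendsto_of_bdd_of_subseq_limits hbd
    intro w ns hns hw
    refine subgrad_unique hUo hxbU hfdxb (fun u hu => ?_)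
    have hsubj : ∀ j, h (ns j) (y (ns j)) +
        fderiv ℝ (h (ns j)) (y (ns j)) (u - y (ns j)) ≤ h (ns j) u :=
      fun j => subgrad_ineq (hcv (ns j)) (hyU (ns j))
        ((hdf (ns j)).differentiableAt (hUo.mem_nhds (hyU (ns j)))) hu
    have hytendns : Tendsto (fun j => y (ns j)) atTop (𝓝 xb) := hytend.comp hns
    have hL : Tendsto (fun j => h (ns j) (y (ns j)) +
        fderiv ℝ (h (ns j)) (y (ns j)) (u - y (ns j))) atTop (𝓝 (f xb + w (u - xb))) :=
      (hval.comp hns).add (eval_tendsto hw (tendsto_const_nhds.sub hytendns))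
    have hR : Tendsto (fun j => h (ns j) u) atTop (𝓝 (f u)) := (hptw u hu).comp hns
    exact le_of_tendsto_of_tendsto' hL hR hsubj
  have claim1 : Tendsto (fun k => fderiv ℝ f (y k)) atTop (𝓝 (fderiv ℝ f xb)) := by
    refine main (fun _ => f) (fun _ => hfconv) (fun _ => hfdiff)
      (fun k => hgbf _ (hyball k)) ?_ (fun u hu => tendsto_const_nhds)
    exact (hfdxb.continuousAt.tendsto).comp hytend
  have claim2 : Tendsto (fun k => fderiv ℝ (fs (m k)) (y k)) atTop (𝓝 (fderiv ℝ f xb)) := by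
    refine main (fun k => fs (m k)) (fun k => hconv _) (fun k => hdiff _)
      (fun k => hgb _ _ (hyball k)) ?_ (fun u hu => (hpt u hu).comp hmtend)
    have hxbball : xb ∈ closedBall xb s := mem_closedBall_self hs.le
    have hbound : ∀ k, |fs (m k) (y k) - f xb| ≤ C * ‖y k - xb‖ + |fs (m k) xb - f xb| := by
      intro k
      calc |fs (m k) (y k) - f xb|
          ≤ |fs (m k) (y k) - fs (m k) xb| + |fs (m k) xb - f xb| := abs_sub_le _ _ _
        _ ≤ C * ‖y k - xb‖ + |fs (m k) xb - f xb| :=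
            add_le_add_left (hlip (m k) _ (hyball k) _ hxbball) _
    have a1 : Tendsto (fun k => ‖y k - xb‖) atTop (𝓝 0) :=
      tendsto_iff_norm_sub_tendsto_zero.1 hytend
    have a2 : Tendsto (fun k => |fs (m k) xb - f xb|) atTop (𝓝 0) := by
      have := tendsto_iff_norm_sub_tendsto_zero.1 ((hpt xb hxbU).comp hmtend)
      simpa [Real.norm_eq_abs] using this
    have ht1 : Tendsto (fun k => C * ‖y k - xb‖ + |fs (m k) xb - f xb|) atTop (𝓝 0) := by
      simpa using (a1.const_mul C).add a2
    have habs : Tendsto (fun k => |fs (m k) (y k) - f xb|) atTop (𝓝 0) :=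
      squeeze_zero (fun k => abs_nonneg _) hbound ht1
    have hsub0 : Tendsto (fun k => fs (m k) (y k) - f xb) atTop (𝓝 0) :=
      (tendsto_zero_iff_abs_tendsto_zero _).2 habs
    simpa using hsub0.add_const (f xb)
  have hd0 : Tendsto (fun k => dist (fderiv ℝ f (y k)) (fderiv ℝ (fs (m k)) (y k)))
      atTop (𝓝 (dist (fderiv ℝ f xb) (fderiv ℝ f xb))) := claim1.dist claim2
  rw [dist_self] at hd0
  have : ε ≤ 0 := ge_of_tendsto hd0 (Eventually.of_forall hdist)
  linarith
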